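/- If along a solution of the three point vortex system the invariants S and S_ε both vanish, then each ratio l_{i,j}(t)²/l_{j,k}(t)² of squared mutual distances is constant in time; i.e., the triangle formed by the three vortices evolves self-similarly. -/

import Mathlib

open RealInnerProductSpace

noncomputable def perp (x : EuclideanSpace ℝ (Fin 2)) : EuclideanSpace ℝ (Fin 2) :=
  WithLp.toLp 2 ![x 1, -x 0]

noncomputable def K (ε c : ℝ) (x : EuclideanSpace ℝ (Fin 2)) : EuclideanSpace ℝ (Fin 2) :=
  (c / ‖x‖ ^ (3 - ε)) • perp x

lemma inner_perp (u v : EuclideanSpace ℝ (Fin 2)) :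
    ⟪u, perp v⟫ = u 0 * v 1 - u 1 * v 0 := by
  simp [perp, PiLp.inner_apply, RCLike.inner_apply, Fin.sum_univ_two]
  ring

lemma inner_K (ε c : ℝ) (u v : EuclideanSpace ℝ (Fin 2)) :
    ⟪u, K ε c v⟫ = c * ‖v‖ ^ (ε - 3) * (u 0 * v 1 - u 1 * v 0) := by
  rw [K, real_inner_smul_right, inner_perp, show (ε - 3 : ℝ) = -(3 - ε) by ring,
    Real.rpow_neg (norm_nonneg v), div_eq_mul_inv]

lemma inner_K' (ε c : ℝ) (u v : EuclideanSpace ℝ (Fin 2)) :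
    ⟪K ε c v, u⟫ = c * ‖v‖ ^ (ε - 3) * (u 0 * v 1 - u 1 * v 0) := by
  rw [real_inner_comm, inner_K]

lemma erase3 (i j k : Fin 3) (hij : i ≠ j) (hik : i ≠ k) (hjk : j ≠ k) :
    (Finset.univ.erase i) = {j, k} := by
  refine (Finset.eq_of_subset_of_card_le ?_ ?_).symm
  · intro m hm
    simp only [Finset.mem_insert, Finset.mem_singleton] at hm
    rcases hm with rfl | rfl
    · exact Finset.mem_erase.mpr ⟨Ne.symm hij, Finset.mem_univ _⟩
    · exact Finset.mem_erase.mpr ⟨Ne.symm hik, Finset.mem_univ _⟩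
  · rw [Finset.card_erase_of_mem (Finset.mem_univ i), Finset.card_pair hjk]
    simp

lemma perm3 (g : Fin 3 → Fin 3 → ℝ) (w : Fin 3 → ℝ) (hsym : ∀ a b, g a b = g b a)
    (h : g 0 1 / w 2 + g 1 2 / w 0 + g 2 0 / w 1 = 0) :
    ∀ i j k : Fin 3, i ≠ j → i ≠ k → j ≠ k →
      g i j / w k + g j k / w i + g k i / w j = 0 := by
  intro i j k hij hik hjk
  fin_cases i <;> fin_cases j <;> fin_cases k <;>
    simp only [Fin.zero_eta, Fin.mk_one, Fin.reduceFinMk] at * <;>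
    (try (exfalso; simp_all; done)) <;>
    (try simp only [hsym 1 0, hsym 2 0, hsym 2 1] at h ⊢) <;> linarith

lemma alg (ξi ξj ξk A B C ρA ρB ρC : ℝ) (hi : ξi ≠ 0) (hj : ξj ≠ 0) (hk : ξk ≠ 0)
    (e1 : C / ξk + A / ξi + B / ξj = 0)
    (e2 : C * ρC / ξk + A * ρA / ξi + B * ρB / ξj = 0) :
    ξk * (ρB - ρA) * A = ξi * (ρC - ρB) * C := by
  have e1' : C * (ξi * ξj) + A * (ξk * ξj) + B * (ξk * ξi) = 0 := by
    field_simp at e1; linear_combination e1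
  have e2' : C * ρC * (ξi * ξj) + A * ρA * (ξk * ξj) + B * ρB * (ξk * ξi) = 0 := by
    field_simp at e2; linear_combination e2
  apply mul_left_cancel₀ hj
  linear_combination ρB * e1' - e2'

/-- if the invariants `S` and `S_ε` both vanish, then every ratio of
squared mutual distances is constant in time (self-similar evolution). -/
theorem stmt_5 (ε c : ℝ) (hε : ε ∈ Set.Ioo (0:ℝ) 1) (hc : 0 < c)
    (ξ : Fin 3 → ℝ) (hξ : ∀ i, ξ i ≠ 0)
    (x : Fin 3 → ℝ → EuclideanSpace ℝ (Fin 2)) (I : Set ℝ) (hI : IsOpen I)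
    (hconn : IsPreconnected I)
    (hdist : ∀ s ∈ I, ∀ i j : Fin 3, i ≠ j → x i s ≠ x j s)
    (hode : ∀ i : Fin 3, ∀ s ∈ I,
      HasDerivAt (x i) (∑ j ∈ Finset.univ.erase i, ξ j • K ε c (x i s - x j s)) s)
    (hS : ∀ t ∈ I,
      ‖x 0 t - x 1 t‖ ^ 2 / ξ 2 + ‖x 1 t - x 2 t‖ ^ 2 / ξ 0
        + ‖x 2 t - x 0 t‖ ^ 2 / ξ 1 = 0)
    (hSε : ∀ t ∈ I,
      ‖x 0 t - x 1 t‖ ^ (ε - 1) / ξ 2 + ‖x 1 t - x 2 t‖ ^ (ε - 1) / ξ 0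
        + ‖x 2 t - x 0 t‖ ^ (ε - 1) / ξ 1 = 0) :
    ∀ i j k : Fin 3, i ≠ j → i ≠ k → j ≠ k → ∀ t ∈ I, ∀ s ∈ I,
      ‖x i t - x j t‖ ^ 2 / ‖x j t - x k t‖ ^ 2
        = ‖x i s - x j s‖ ^ 2 / ‖x j s - x k s‖ ^ 2 := by
  -- derivative of each squared distance
  have key : ∀ i j k : Fin 3, i ≠ j → i ≠ k → j ≠ k → ∀ t ∈ I,
      HasDerivAt (fun s => ‖x i s - x j s‖ ^ 2)
        (2 * c * ξ k
          * (x i t 0 * x j t 1 - x j t 0 * x i t 1 + x j t 0 * x k t 1 - x k t 0 * x j t 1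
              + x k t 0 * x i t 1 - x i t 0 * x k t 1)
          * (‖x i t - x k t‖ ^ (ε - 3) - ‖x j t - x k t‖ ^ (ε - 3))) t := by
    intro i j k hij hik hjk t ht
    have hdi := hode i t ht
    have hdj := hode j t ht
    rw [erase3 i j k hij hik hjk, Finset.sum_pair hjk] at hdi
    rw [erase3 j i k (Ne.symm hij) hjk hik, Finset.sum_pair hik] at hdj
    have hy := hdi.sub hdj
    have h2 := HasDerivAt.inner ℝ hy hy
    simp only [real_inner_self_eq_norm_sq] at h2
    refine HasDerivAt.congr_deriv h2 ?_
    simp only [inner_sub_right, inner_add_right, inner_sub_left, inner_add_left,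
      real_inner_smul_right, real_inner_smul_left, inner_K, inner_K', PiLp.sub_apply,
      Pi.sub_apply]
    ring
  intro i j k hij hik hjk t ht s hs
  have hg : ∀ u ∈ I,
      HasDerivAt (fun r => ‖x i r - x j r‖ ^ 2 / ‖x j r - x k r‖ ^ 2) 0 u := by
    intro u hu
    have hC := key i j k hij hik hjk u hu
    have hA := key j k i hjk (Ne.symm hij) (Ne.symm hik) u hu
    have hAne : ‖x j u - x k u‖ ^ 2 ≠ 0 :=
      pow_ne_zero _ (norm_ne_zero_iff.mpr (sub_ne_zero.mpr (hdist u hu j k hjk)))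
    have hp : ∀ a b : Fin 3, a ≠ b → (0:ℝ) < ‖x a u - x b u‖ := fun a b hab =>
      norm_pos_iff.mpr (sub_ne_zero.mpr (hdist u hu a b hab))
    have e1 := perm3 (fun a b => ‖x a u - x b u‖ ^ 2) ξ
      (fun a b => by simp only [norm_sub_rev (x a u) (x b u)]) (hS u hu) i j k hij hik hjk
    have e2 := perm3 (fun a b => ‖x a u - x b u‖ ^ (ε - 1)) ξ
      (fun a b => by simp only [norm_sub_rev (x a u) (x b u)]) (hSε u hu) i j k hij hik hjk
    have hsplit : ∀ a b : Fin 3, a ≠ b →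
        ‖x a u - x b u‖ ^ (ε - 1)
          = ‖x a u - x b u‖ ^ 2 * ‖x a u - x b u‖ ^ (ε - 3) := by
      intro a b hab
      have h2 : ‖x a u - x b u‖ ^ (2:ℝ) = ‖x a u - x b u‖ ^ (2:ℕ) := by
        rw [← Real.rpow_natCast]; norm_num
      rw [show (ε - 1 : ℝ) = 2 + (ε - 3) by ring, Real.rpow_add (hp a b hab), h2]
    rw [hsplit i j hij, hsplit j k hjk, hsplit k i (Ne.symm hik)] at e2
    rw [norm_sub_rev (x k u) (x i u)] at e1 e2
    have H := alg (ξ i) (ξ j) (ξ k)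
      (‖x j u - x k u‖ ^ 2) (‖x i u - x k u‖ ^ 2) (‖x i u - x j u‖ ^ 2)
      (‖x j u - x k u‖ ^ (ε - 3)) (‖x i u - x k u‖ ^ (ε - 3)) (‖x i u - x j u‖ ^ (ε - 3))
      (hξ i) (hξ j) (hξ k) e1 e2
    have hdiv := hC.div hA hAne
    have hnum :
        (2 * c * ξ k
            * (x i u 0 * x j u 1 - x j u 0 * x i u 1 + x j u 0 * x k u 1 - x k u 0 * x j u 1
                + x k u 0 * x i u 1 - x i u 0 * x k u 1)
            * (‖x i u - x k u‖ ^ (ε - 3) - ‖x j u - x k u‖ ^ (ε - 3))) * ‖x j u - x k u‖ ^ 2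
          - ‖x i u - x j u‖ ^ 2 *
            (2 * c * ξ i
              * (x j u 0 * x k u 1 - x k u 0 * x j u 1 + x k u 0 * x i u 1 - x i u 0 * x k u 1
                  + x i u 0 * x j u 1 - x j u 0 * x i u 1)
              * (‖x j u - x i u‖ ^ (ε - 3) - ‖x k u - x i u‖ ^ (ε - 3))) = 0 := by
      rw [norm_sub_rev (x j u) (x i u), norm_sub_rev (x k u) (x i u)]
      linear_combination (2 * c
        * (x i u 0 * x j u 1 - x j u 0 * x i u 1 + x j u 0 * x k u 1 - x k u 0 * x j u 1
            + x k u 0 * x i u 1 - x i u 0 * x k u 1)) * H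
    refine HasDerivAt.congr_deriv hdiv ?_
    rw [div_eq_zero_iff]
    left
    exact hnum
  have hconv : Convex ℝ I := hconn.convex
  have hdiff : DifferentiableOn ℝ
      (fun r => ‖x i r - x j r‖ ^ 2 / ‖x j r - x k r‖ ^ 2) I :=
    fun u hu => (hg u hu).differentiableAt.differentiableWithinAt
  have hfd : ∀ u ∈ I, fderivWithin ℝ
      (fun r => ‖x i r - x j r‖ ^ 2 / ‖x j r - x k r‖ ^ 2) I u = 0 := by
    intro u hu
    rw [fderivWithin_of_isOpen hI hu, (hg u hu).hasFDerivAt.fderiv]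
    ext
    simp
  exact hconv.is_const_of_fderivWithin_eq_zero hdiff hfd ht hs
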